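/- Let ρ ∈ ℕ and x ∈ 𝙰_ρ^G. Then x ∈ ℰ(sym_ρ(G)) if and only if for every g ∈ G the configuration z = g⁻¹·x satisfies the following two axioms: (Axiom 1) z_e(s) z_s(s⁻¹) = e for every s ∈ S ∪ S⁻¹; (Axiom 2) for every h ∈ G with |h|_G ≤ ρ there exists a unique sequence s_1, …, s_n ∈ S ∪ S⁻¹ with |s_1⋯s_n|_G = n ≤ ρ² + 1 such that h = z_e(s_1) z_{s_1}(s_2) z_{s_1 s_2}(s_3) ⋯ z_{s_1⋯s_{n−1}}(s_n), and moreover this n satisfies n ≤ ρ·|h|_G. -/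

import Mathlib

/- Characterization of ℰ(sym_ρ(G)) inside 𝙰_ρ^G by the two local axioms. -/

namespace Stmt14

abbrev G (r : ℕ) : Type := FreeGroup (Fin r)

def SS (r : ℕ) : Set (G r) :=
  {g | ∃ i : Fin r, g = FreeGroup.of i ∨ g = (FreeGroup.of i)⁻¹}

abbrev A (r : ℕ) : Type := SS r → G r

/-- `S ∪ S⁻¹` is closed under inversion. -/
def ssInv {r : ℕ} (s : SS r) : SS r :=
  ⟨s.val⁻¹, by
    obtain ⟨i, h | h⟩ := s.property
    · exact ⟨i, Or.inr (by rw [h])⟩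
    · exact ⟨i, Or.inl (by rw [h, inv_inv])⟩⟩

/-- The left shift action of `G` on `𝙰^G`: `(g·x)(f) = x(g⁻¹ f)`. -/
def shift (r : ℕ) (g : G r) (x : G r → A r) : G r → A r := fun f => x (g⁻¹ * f)

/-- `ℰ : sym_e(G) → 𝙰^G`, `ℰ(φ)_h(s) = φ(h)⁻¹ φ(h s)`. -/
def E (r : ℕ) (φ : Equiv.Perm (G r)) : G r → A r :=
  fun h s => (φ h)⁻¹ * φ (h * s.val)

def InSymRho (r ρ : ℕ) (φ : Equiv.Perm (G r)) : Prop :=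
  φ 1 = 1 ∧
    ∀ (g s : G r), s ∈ SS r →
      ((φ g)⁻¹ * φ (g * s)).norm ≤ ρ ∧ ((φ.symm g)⁻¹ * φ.symm (g * s)).norm ≤ ρ

/-- The telescoping product `z_e(s₁) z_{s₁}(s₂) ⋯ z_{s₁⋯s_{n-1}}(s_n)` (started at `g`). -/
def wordEval (r : ℕ) (z : G r → A r) : G r → List (SS r) → G r
  | _, [] => 1
  | g, s :: l => z g s * wordEval r z (g * s.val) l

def Reduced (r : ℕ) (l : List (SS r)) : Prop :=
  ((l.map Subtype.val).prod).norm = l.length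

/-- Axiom 1 for a configuration `z`: `z_e(s) z_s(s⁻¹) = e` for all `s ∈ S ∪ S⁻¹`. -/
def Axiom1 (r : ℕ) (z : G r → A r) : Prop :=
  ∀ s : SS r, z 1 s * z s.val (ssInv s) = 1

/-- Axiom 2 for a configuration `z`: every `h` with `|h| ≤ ρ` is represented by a unique
reduced word of length `≤ ρ²+1` via the telescoping products of `z`, and moreover the
length of that word is at most `ρ·|h|`. -/
def Axiom2 (r ρ : ℕ) (z : G r → A r) : Prop :=
  ∀ h : G r, h.norm ≤ ρ →
    (∃! l : List (SS r),
        Reduced r l ∧ l.length ≤ ρ ^ 2 + 1 ∧ h = wordEval r z 1 l) ∧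
    (∀ l : List (SS r),
        Reduced r l → l.length ≤ ρ ^ 2 + 1 → h = wordEval r z 1 l →
        l.length ≤ ρ * h.norm)

section Helpers

variable {r : ℕ}

/-! ### letters -/

def toEl (p : Fin r × Bool) : G r := cond p.2 (FreeGroup.of p.1) (FreeGroup.of p.1)⁻¹

lemma toWord_toEl (p : Fin r × Bool) : (toEl p).toWord = [p] := by
  obtain ⟨i, b⟩ := p
  cases b
  · show ((FreeGroup.of i)⁻¹).toWord = _
    rw [FreeGroup.toWord_inv, FreeGroup.toWord_of]
    rfl
  · exact FreeGroup.toWord_of i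

lemma norm_toEl (p : Fin r × Bool) : (toEl p).norm = 1 := by
  show (toEl p).toWord.length = 1
  rw [toWord_toEl]; rfl

lemma toEl_injective : Function.Injective (toEl (r := r)) := by
  intro p q h
  have := congrArg FreeGroup.toWord h
  rw [toWord_toEl, toWord_toEl] at this
  exact List.singleton_injective this

lemma mk_singleton (p : Fin r × Bool) : FreeGroup.mk [p] = toEl p := by
  rw [← toWord_toEl p, FreeGroup.mk_toWord]

lemma toEl_not (i : Fin r) (b : Bool) : toEl (i, !b) = (toEl (i, b))⁻¹ := by
  cases b <;> simp [toEl]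

noncomputable def letter (s : SS r) : Fin r × Bool :=
  if s.val = FreeGroup.of s.property.choose then (s.property.choose, true)
  else (s.property.choose, false)

lemma toEl_letter (s : SS r) : toEl (letter s) = s.val := by
  unfold letter
  split_ifs with h
  · exact h.symm
  · rcases s.property.choose_spec with h' | h'
    · exact absurd h' h
    · exact h'.symm

lemma letter_injective : Function.Injective (letter (r := r)) := by
  intro s t h
  have := congrArg toEl h
  rw [toEl_letter, toEl_letter] at this
  exact Subtype.ext this

def ofEl (p : Fin r × Bool) : SS r :=
  ⟨toEl p, by
    obtain ⟨i, b⟩ := p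
    cases b
    · exact ⟨i, Or.inr rfl⟩
    · exact ⟨i, Or.inl rfl⟩⟩

lemma letter_ofEl (p : Fin r × Bool) : letter (ofEl p) = p :=
  toEl_injective (by rw [toEl_letter]; rfl)

/-! ### products of lists of letters -/

def prodList (l : List (SS r)) : G r := (l.map Subtype.val).prod

lemma Reduced_def (l : List (SS r)) : Reduced r l ↔ (prodList l).norm = l.length := Iff.rfl

@[simp] lemma prodList_nil : prodList ([] : List (SS r)) = 1 := rfl

@[simp] lemma prodList_cons (s : SS r) (l : List (SS r)) :
    prodList (s :: l) = s.val * prodList l := by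
  simp [prodList]

@[simp] lemma prodList_append (l₁ l₂ : List (SS r)) :
    prodList (l₁ ++ l₂) = prodList l₁ * prodList l₂ := by
  simp [prodList]

lemma prodList_eq_mk (l : List (SS r)) : prodList l = FreeGroup.mk (l.map letter) := by
  induction l with
  | nil => simp [FreeGroup.one_eq_mk]
  | cons s l ih =>
      rw [prodList_cons, ih, List.map_cons, ← List.singleton_append, ← FreeGroup.mul_mk,
        mk_singleton, toEl_letter]

lemma norm_prodList_le (l : List (SS r)) : (prodList l).norm ≤ l.length := by
  rw [prodList_eq_mk]
  calc (FreeGroup.mk (l.map letter)).norm ≤ (l.map letter).length := FreeGroup.norm_mk_le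
  _ = l.length := List.length_map _

lemma prodList_parity (l : List (SS r)) : ∃ n, l.length = (prodList l).norm + 2 * n := by
  have h1 : (prodList l).norm = (FreeGroup.reduce (l.map letter)).length := by
    rw [prodList_eq_mk]
    show (FreeGroup.mk (l.map letter)).toWord.length = _
    rw [FreeGroup.toWord_mk]
  obtain ⟨n, hn⟩ := FreeGroup.Red.length (FreeGroup.reduce.red (L := l.map letter))
  exact ⟨n, by rw [h1, ← hn, List.length_map]⟩

lemma norm_SS (s : SS r) : s.val.norm = 1 := by
  rw [← toEl_letter s]; exact norm_toEl _

/-! ### canonical reduced lists -/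

noncomputable def wordList (g : G r) : List (SS r) := g.toWord.map ofEl

lemma prodList_wordList (g : G r) : prodList (wordList g) = g := by
  rw [prodList_eq_mk, wordList, List.map_map]
  have : (letter (r := r)) ∘ ofEl = id := funext letter_ofEl
  rw [this, List.map_id, FreeGroup.mk_toWord]

lemma length_wordList (g : G r) : (wordList g).length = g.norm :=
  List.length_map _

lemma reduced_wordList (g : G r) : Reduced r (wordList g) := by
  rw [Reduced_def, prodList_wordList, length_wordList]

lemma red_eq_of_length {α : Type*} {L L' : List (α × Bool)} (h : FreeGroup.Red L L')
    (hl : L.length ≤ L'.length) : L = L' := by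
  rcases Relation.ReflTransGen.cases_head h with h1 | ⟨M, hstep, hred⟩
  · exact h1
  · have h2 := hstep.length
    have h3 := FreeGroup.Red.length_le hred
    omega

lemma reduce_eq_self_of_reduced (l : List (SS r)) (h : Reduced r l) :
    FreeGroup.reduce (l.map letter) = l.map letter := by
  have h1 : (prodList l).norm = (FreeGroup.reduce (l.map letter)).length := by
    rw [prodList_eq_mk]
    show (FreeGroup.mk (l.map letter)).toWord.length = _
    rw [FreeGroup.toWord_mk]
  rw [Reduced_def] at h
  refine (red_eq_of_length (FreeGroup.reduce.red) ?_).symm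
  rw [List.length_map, ← h, h1]

lemma eq_wordList (l : List (SS r)) (h : Reduced r l) : l = wordList (prodList l) := by
  have h1 : (prodList l).toWord = l.map letter := by
    rw [prodList_eq_mk, FreeGroup.toWord_mk, reduce_eq_self_of_reduced l h]
  apply List.map_injective_iff.mpr letter_injective
  rw [← h1]
  show _ = (wordList (prodList l)).map letter
  rw [wordList, List.map_map]
  have : (letter (r := r)) ∘ ofEl = id := funext letter_ofEl
  rw [this, List.map_id]

lemma reduced_unique {l l' : List (SS r)} (h : Reduced r l) (h' : Reduced r l')
    (hp : prodList l = prodList l') : l = l' := by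
  rw [eq_wordList l h, eq_wordList l' h', hp]

/-! ### extraction of a cancelling pair -/

lemma map_split : ∀ (l : List (SS r)) (Aa : List (Fin r × Bool)) (p q : Fin r × Bool)
    (B : List (Fin r × Bool)), l.map letter = Aa ++ p :: q :: B →
    ∃ l₁ σ τ l₂, l = l₁ ++ σ :: τ :: l₂ ∧ letter σ = p ∧ letter τ = q
  | [], Aa, p, q, B, h => by simp at h
  | [σ], Aa, p, q, B, h => by
      rcases Aa with _ | ⟨a, Aa⟩ <;> simp_all
  | σ :: τ :: l, [], p, q, B, h => by
      simp only [List.map_cons, List.nil_append, List.cons.injEq] at h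
      exact ⟨[], σ, τ, l, rfl, h.1, h.2.1⟩
  | σ :: l, a :: Aa, p, q, B, h => by
      simp only [List.map_cons, List.cons_append, List.cons.injEq] at h
      obtain ⟨l₁, σ', τ', l₂, rfl, h1, h2⟩ := map_split l Aa p q B h.2
      exact ⟨σ :: l₁, σ', τ', l₂, rfl, h1, h2⟩

lemma step_decomp {α : Type*} {L M : List (α × Bool)} (h : FreeGroup.Red.Step L M) :
    ∃ Aa B x bb, L = Aa ++ (x, bb) :: (x, !bb) :: B := by
  cases h with
  | @not Aa B x bb => exact ⟨Aa, B, x, bb, rfl⟩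

lemma exists_cancel (l : List (SS r)) (h : (prodList l).norm ≠ l.length) :
    ∃ l₁ σ τ l₂, l = l₁ ++ σ :: τ :: l₂ ∧ (τ : SS r).val = (σ : SS r).val⁻¹ := by
  have h1 : FreeGroup.reduce (l.map letter) ≠ l.map letter := by
    intro he
    apply h
    rw [prodList_eq_mk]
    show (FreeGroup.mk (l.map letter)).toWord.length = _
    rw [FreeGroup.toWord_mk, he, List.length_map]
  rcases Relation.ReflTransGen.cases_head
      (FreeGroup.reduce.red (L := l.map letter)) with h2 | ⟨M, hstep, _⟩
  · exact absurd h2.symm h1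
  · obtain ⟨Aa, B, i, b, hEq⟩ := step_decomp hstep
    obtain ⟨l₁, σ, τ, l₂, rfl, hσ, hτ⟩ := map_split l Aa (i, b) (i, !b) B hEq
    refine ⟨l₁, σ, τ, l₂, rfl, ?_⟩
    have : toEl (letter τ) = toEl (i, !b) := by rw [hτ]
    rw [toEl_letter, toEl_not] at this
    rw [this, ← hσ, toEl_letter]


/-! ### wordEval basics -/

@[simp] lemma wordEval_nil (z : G r → A r) (g : G r) : wordEval r z g [] = 1 := rfl

@[simp] lemma wordEval_cons (z : G r → A r) (g : G r) (s : SS r) (l : List (SS r)) :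
    wordEval r z g (s :: l) = z g s * wordEval r z (g * s.val) l := rfl

lemma wordEval_shift (x : G r → A r) (g : G r) :
    ∀ (l : List (SS r)) (a : G r), wordEval r (shift r g⁻¹ x) a l = wordEval r x (g * a) l
  | [], a => rfl
  | s :: l, a => by
      rw [wordEval_cons, wordEval_cons]
      have h1 : shift r g⁻¹ x a = x (g * a) := by rw [shift, inv_inv]
      rw [h1, wordEval_shift x g l (a * s.val), mul_assoc]

lemma wordEval_shift' (x : G r → A r) (g : G r) (l : List (SS r)) :
    wordEval r (shift r g⁻¹ x) 1 l = wordEval r x g l := by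
  rw [wordEval_shift, mul_one]

lemma wordEval_snoc (x : G r → A r) :
    ∀ (l : List (SS r)) (a : G r) (s : SS r),
      wordEval r x a (l ++ [s]) = wordEval r x a l * x (a * prodList l) s
  | [], a, s => by simp
  | t :: l, a, s => by
      rw [List.cons_append, wordEval_cons, wordEval_snoc x l (a * t.val) s, wordEval_cons,
        prodList_cons]
      simp [mul_assoc]

/-! ### the forward direction -/

lemma perm_lipschitz (ρ : ℕ) (φ : Equiv.Perm (G r)) (hsym : InSymRho r ρ φ) :
    ∀ (l : List (SS r)) (u : G r),
      ((φ.symm u)⁻¹ * φ.symm (u * prodList l)).norm ≤ ρ * l.length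
  | [], u => by simp
  | s :: l, u => by
      have h1 : (φ.symm u)⁻¹ * φ.symm (u * prodList (s :: l)) =
          ((φ.symm u)⁻¹ * φ.symm (u * s.val)) *
            ((φ.symm (u * s.val))⁻¹ * φ.symm ((u * s.val) * prodList l)) := by
        rw [prodList_cons, ← mul_assoc u s.val (prodList l)]
        group
      rw [h1]
      calc (((φ.symm u)⁻¹ * φ.symm (u * s.val)) *
            ((φ.symm (u * s.val))⁻¹ * φ.symm ((u * s.val) * prodList l))).norm
          ≤ ((φ.symm u)⁻¹ * φ.symm (u * s.val)).norm +
            ((φ.symm (u * s.val))⁻¹ * φ.symm ((u * s.val) * prodList l)).norm :=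
            FreeGroup.norm_mul_le _ _
        _ ≤ ρ + ρ * l.length :=
            Nat.add_le_add ((hsym.2 u s.val s.property).2) (perm_lipschitz ρ φ hsym l (u * s.val))
        _ ≤ ρ * (s :: l).length := by
            rw [List.length_cons]
            ring_nf
            omega

lemma wordEval_perm (x : G r → A r) (φ : Equiv.Perm (G r)) (hEx : E r φ = x) :
    ∀ (l : List (SS r)) (a : G r), wordEval r x a l = (φ a)⁻¹ * φ (a * prodList l)
  | [], a => by simp
  | s :: l, a => by
      have hx : x a s = (φ a)⁻¹ * φ (a * s.val) := by rw [← hEx]; rfl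
      rw [wordEval_cons, hx, wordEval_perm x φ hEx l (a * s.val), prodList_cons,
        ← mul_assoc a s.val (prodList l)]
      group

lemma forward_dir (ρ : ℕ) (x : G r → A r) (φ : Equiv.Perm (G r))
    (hsym : InSymRho r ρ φ) (hEx : E r φ = x) :
    ∀ g : G r, Axiom1 r (shift r g⁻¹ x) ∧ Axiom2 r ρ (shift r g⁻¹ x) := by
  intro g
  have hx : ∀ a s, x a s = (φ a)⁻¹ * φ (a * (s : SS r).val) := by
    intro a s; rw [← hEx]; rfl
  constructor
  · intro s
    have h1 : shift r g⁻¹ x 1 s = x g s := by rw [shift, inv_inv, mul_one]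
    have h2 : shift r g⁻¹ x s.val (ssInv s) = x (g * s.val) (ssInv s) := by
      rw [shift, inv_inv]
    rw [h1, h2, hx, hx]
    show (φ g)⁻¹ * φ (g * s.val) * ((φ (g * s.val))⁻¹ * φ (g * s.val * s.val⁻¹)) = 1
    rw [mul_inv_cancel_right]
    group
  · intro h hh
    set w : G r := g⁻¹ * φ.symm (φ g * h) with hw
    have key : ∀ l : List (SS r), (h = wordEval r (shift r g⁻¹ x) 1 l) ↔ prodList l = w := by
      intro l
      rw [wordEval_shift', wordEval_perm x φ hEx]
      constructor
      · intro he
        have : φ (g * prodList l) = φ g * h := by rw [he]; group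
        have h2 : g * prodList l = φ.symm (φ g * h) := by
          rw [← this, Equiv.symm_apply_apply]
        rw [hw, ← h2]; group
      · intro he
        have h2 : g * prodList l = φ.symm (φ g * h) := by rw [he, hw]; group
        rw [h2, Equiv.apply_symm_apply]; group
    have hnw : w.norm ≤ ρ * h.norm := by
      have := perm_lipschitz ρ φ hsym (wordList h) (φ g)
      rw [prodList_wordList, length_wordList, Equiv.symm_apply_apply] at this
      exact this
    have hnw2 : w.norm ≤ ρ ^ 2 + 1 := by
      calc w.norm ≤ ρ * h.norm := hnw
        _ ≤ ρ * ρ := Nat.mul_le_mul_left ρ hh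
        _ ≤ ρ ^ 2 + 1 := by rw [pow_two]; omega
    constructor
    · refine ⟨wordList w, ⟨reduced_wordList w, ?_, ?_⟩, ?_⟩
      · rw [length_wordList]; exact hnw2
      · rw [key]; exact prodList_wordList w
      · rintro l ⟨hred, _, hl⟩
        rw [key] at hl
        rw [eq_wordList l hred, hl]
    · intro l hred _ hl
      rw [key] at hl
      rw [Reduced_def] at hred
      rw [← hred, hl]
      exact hnw


/-! ### the backward direction -/

section Backward

variable (ρ : ℕ) (x : G r → A r)

noncomputable def fmap : G r → G r := fun g => wordEval r x 1 (wordList g)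

lemma fmap_one : fmap x 1 = 1 := by
  show wordEval r x 1 (wordList 1) = 1
  rw [wordList, FreeGroup.toWord_one]
  rfl

lemma fmap_mul_s (hA1 : ∀ (g : G r) (s : SS r), x g s * x (g * s.val) (ssInv s) = 1)
    (g : G r) (s : SS r) : fmap x (g * s.val) = fmap x g * x g s := by
  by_cases hred : Reduced r (wordList g ++ [s])
  · have hprod : prodList (wordList g ++ [s]) = g * s.val := by
      rw [prodList_append, prodList_wordList, prodList_cons, prodList_nil, mul_one]
    have h1 : wordList (g * s.val) = wordList g ++ [s] := by
      have := eq_wordList _ hred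
      rw [hprod] at this
      exact this.symm
    show wordEval r x 1 (wordList (g * s.val)) = _
    rw [h1, wordEval_snoc, prodList_wordList, one_mul]
    rfl
  · have hle : (g * s.val).norm ≤ g.norm + 1 := by
      calc (g * s.val).norm ≤ g.norm + s.val.norm := FreeGroup.norm_mul_le _ _
      _ = g.norm + 1 := by rw [norm_SS]
    have hpar : ∃ n, g.norm + 1 = (g * s.val).norm + 2 * n := by
      have h2 := prodList_parity (wordList g ++ [s])
      rw [prodList_append, prodList_wordList, prodList_cons, prodList_nil, mul_one,
        List.length_append, length_wordList] at h2
      exact h2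
    have hne : (g * s.val).norm ≠ g.norm + 1 := by
      intro h
      apply hred
      rw [Reduced_def, prodList_append, prodList_wordList, prodList_cons, prodList_nil, mul_one,
        List.length_append, length_wordList, h]
      rfl
    have hge : g.norm ≤ (g * s.val).norm + 1 := by
      have h3 : g = (g * s.val) * s.val⁻¹ := by group
      calc g.norm = ((g * s.val) * s.val⁻¹).norm := by rw [← h3]
      _ ≤ (g * s.val).norm + (s.val⁻¹).norm := FreeGroup.norm_mul_le _ _
      _ = (g * s.val).norm + 1 := by rw [FreeGroup.norm_inv_eq, norm_SS]
    have hnorm : g.norm = (g * s.val).norm + 1 := by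
      obtain ⟨n, hn⟩ := hpar
      omega
    have hprod2 : prodList (wordList (g * s.val) ++ [ssInv s]) = g := by
      rw [prodList_append, prodList_wordList, prodList_cons, prodList_nil, mul_one]
      show g * s.val * s.val⁻¹ = g
      group
    have hred2 : Reduced r (wordList (g * s.val) ++ [ssInv s]) := by
      rw [Reduced_def, hprod2, List.length_append, length_wordList, hnorm]
      rfl
    have h1 : wordList g = wordList (g * s.val) ++ [ssInv s] := by
      have := eq_wordList _ hred2
      rw [hprod2] at this
      exact this.symm
    have h2 : fmap x g = fmap x (g * s.val) * x (g * s.val) (ssInv s) := by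
      show wordEval r x 1 (wordList g) = _
      rw [h1, wordEval_snoc, prodList_wordList, one_mul]
      rfl
    have h3 : x (g * s.val) (ssInv s) = (x g s)⁻¹ :=
      eq_inv_of_mul_eq_one_right ((hA1 g s))
    rw [h2, h3]
    group

lemma fmap_mul_prodList (hA1 : ∀ (g : G r) (s : SS r), x g s * x (g * s.val) (ssInv s) = 1) :
    ∀ (l : List (SS r)) (g : G r),
      fmap x (g * prodList l) = fmap x g * wordEval r x g l
  | [], g => by simp
  | s :: l, g => by
      rw [prodList_cons, ← mul_assoc g s.val (prodList l),
        fmap_mul_prodList hA1 l (g * s.val), fmap_mul_s x hA1 g s, wordEval_cons, mul_assoc]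

/-- The hypothesis bundle for the backward direction. -/
def Hyp : Prop :=
  (∀ (g : G r) (s : SS r), x g s * x (g * s.val) (ssInv s) = 1) ∧
    ∀ g h : G r, h.norm ≤ ρ →
      (∃! l : List (SS r), Reduced r l ∧ l.length ≤ ρ ^ 2 + 1 ∧
        fmap x (g * prodList l) = fmap x g * h) ∧
      (∀ l : List (SS r), Reduced r l → l.length ≤ ρ ^ 2 + 1 →
        fmap x (g * prodList l) = fmap x g * h → l.length ≤ ρ * h.norm)

lemma hyp_of_axioms (hax : ∀ g : G r, Axiom1 r (shift r g⁻¹ x) ∧ Axiom2 r ρ (shift r g⁻¹ x)) :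
    Hyp ρ x := by
  have hA1 : ∀ (g : G r) (s : SS r), x g s * x (g * s.val) (ssInv s) = 1 := by
    intro g s
    have h := (hax g).1 s
    rw [shift, shift, inv_inv, mul_one] at h
    exact h
  refine ⟨hA1, fun g h hh => ?_⟩
  have hiff : ∀ l, (h = wordEval r (shift r g⁻¹ x) 1 l) ↔
      fmap x (g * prodList l) = fmap x g * h := by
    intro l
    rw [wordEval_shift', fmap_mul_prodList x hA1 l g]
    constructor
    · intro he; rw [he]
    · intro he; exact (mul_left_cancel he).symm
  obtain ⟨⟨l₀, hl₀, hu⟩, h2⟩ := (hax g).2 h hh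
  constructor
  · exact ⟨l₀, ⟨hl₀.1, hl₀.2.1, (hiff l₀).1 hl₀.2.2⟩,
      fun l hl => hu l ⟨hl.1, hl.2.1, (hiff l).2 hl.2.2⟩⟩
  · exact fun l ha hb hc => h2 l ha hb ((hiff l).2 hc)

open Classical in
noncomputable def pick (g h : G r) : List (SS r) :=
  if hc : ∃ l : List (SS r), Reduced r l ∧ l.length ≤ ρ ^ 2 + 1 ∧
      fmap x (g * prodList l) = fmap x g * h
  then hc.choose else []

lemma pick_spec (hyp : Hyp ρ x) {g h : G r} (hh : h.norm ≤ ρ) :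
    Reduced r (pick ρ x g h) ∧ (pick ρ x g h).length ≤ ρ ^ 2 + 1 ∧
      fmap x (g * prodList (pick ρ x g h)) = fmap x g * h := by
  have hc : ∃ l : List (SS r), Reduced r l ∧ l.length ≤ ρ ^ 2 + 1 ∧
      fmap x (g * prodList l) = fmap x g * h := ((hyp.2 g h hh).1).exists
  rw [pick, dif_pos hc]
  exact hc.choose_spec

lemma pick_unique (hyp : Hyp ρ x) {g h : G r} (hh : h.norm ≤ ρ) {l : List (SS r)}
    (h1 : Reduced r l) (h2 : l.length ≤ ρ ^ 2 + 1)
    (h3 : fmap x (g * prodList l) = fmap x g * h) : l = pick ρ x g h := by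
  obtain ⟨l₀, _, hu⟩ := (hyp.2 g h hh).1
  exact (hu l ⟨h1, h2, h3⟩).trans (hu _ (pick_spec ρ x hyp hh)).symm

lemma pick_len (hyp : Hyp ρ x) {g h : G r} (hh : h.norm ≤ ρ) :
    (pick ρ x g h).length ≤ ρ * h.norm := by
  obtain ⟨h1, h2, h3⟩ := pick_spec ρ x hyp hh
  exact (hyp.2 g h hh).2 _ h1 h2 h3

noncomputable def tstep (g h : G r) : G r := g * prodList (pick ρ x g h)

lemma tstep_spec (hyp : Hyp ρ x) {g h : G r} (hh : h.norm ≤ ρ) :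
    fmap x (tstep ρ x g h) = fmap x g * h :=
  (pick_spec ρ x hyp hh).2.2

lemma tstep_eq (hyp : Hyp ρ x) {g h : G r} (hh : h.norm ≤ ρ) {l : List (SS r)}
    (h1 : Reduced r l) (h2 : l.length ≤ ρ ^ 2 + 1)
    (h3 : fmap x (g * prodList l) = fmap x g * h) : g * prodList l = tstep ρ x g h := by
  rw [tstep, pick_unique ρ x hyp hh h1 h2 h3]

lemma reduced_nil : Reduced r ([] : List (SS r)) := by
  rw [Reduced_def, prodList_nil, FreeGroup.norm_one]
  rfl

lemma reduced_singleton (s : SS r) : Reduced r [s] := by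
  rw [Reduced_def, prodList_cons, prodList_nil, mul_one, norm_SS]
  rfl

lemma tstep_cancel (hyp : Hyp ρ x) {g h : G r} (hh : h.norm ≤ ρ) :
    tstep ρ x (tstep ρ x g h) h⁻¹ = g := by
  have hh' : (h⁻¹).norm ≤ ρ := by rw [FreeGroup.norm_inv_eq]; exact hh
  have hlen : (wordList (prodList (pick ρ x g h))⁻¹).length ≤ ρ ^ 2 + 1 := by
    rw [length_wordList, FreeGroup.norm_inv_eq]
    exact le_trans (norm_prodList_le _) (pick_spec ρ x hyp hh).2.1
  have heq : fmap x (tstep ρ x g h * prodList (wordList (prodList (pick ρ x g h))⁻¹)) =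
      fmap x (tstep ρ x g h) * h⁻¹ := by
    have h4 : g * prodList (pick ρ x g h) * (prodList (pick ρ x g h))⁻¹ = g := by group
    rw [prodList_wordList, tstep, h4,
      show fmap x (g * prodList (pick ρ x g h)) = fmap x g * h from tstep_spec ρ x hyp hh]
    group
  have h5 := tstep_eq ρ x hyp hh' (reduced_wordList _) hlen heq
  rw [← h5, prodList_wordList, tstep]
  group

noncomputable def tpath : G r → List (SS r) → G r
  | g, [] => g
  | g, σ :: W => tpath (tstep ρ x g σ.val) W

@[simp] lemma tpath_nil (g : G r) : tpath ρ x g [] = g := rfl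

@[simp] lemma tpath_cons (g : G r) (σ : SS r) (W : List (SS r)) :
    tpath ρ x g (σ :: W) = tpath ρ x (tstep ρ x g σ.val) W := rfl

lemma tpath_append : ∀ (Aa B : List (SS r)) (g : G r),
    tpath ρ x g (Aa ++ B) = tpath ρ x (tpath ρ x g Aa) B
  | [], B, g => rfl
  | σ :: Aa, B, g => by
      rw [List.cons_append, tpath_cons, tpath_cons, tpath_append Aa B (tstep ρ x g σ.val)]

lemma fmap_tpath (hyp : Hyp ρ x) (hρ : 1 ≤ ρ) : ∀ (W : List (SS r)) (g : G r),
    fmap x (tpath ρ x g W) = fmap x g * prodList W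
  | [], g => by simp
  | σ :: W, g => by
      rw [tpath_cons, fmap_tpath hyp hρ W (tstep ρ x g σ.val),
        tstep_spec ρ x hyp (by rw [norm_SS]; exact hρ), prodList_cons, mul_assoc]

lemma tpath_cancel_pair (hyp : Hyp ρ x) (hρ : 1 ≤ ρ) :
    ∀ (Aa : List (SS r)) (g : G r) {σ τ : SS r} (_ : τ.val = σ.val⁻¹) (B : List (SS r)),
      tpath ρ x g (Aa ++ σ :: τ :: B) = tpath ρ x g (Aa ++ B)
  | [], g, σ, τ, hinv, B => by
      rw [List.nil_append, List.nil_append, tpath_cons, tpath_cons, hinv,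
        tstep_cancel ρ x hyp (by rw [norm_SS]; exact hρ)]
  | σ' :: Aa, g, σ, τ, hinv, B => by
      rw [List.cons_append, List.cons_append, tpath_cons, tpath_cons,
        tpath_cancel_pair hyp hρ Aa (tstep ρ x g σ'.val) hinv B]

lemma tpath_prod_one (hyp : Hyp ρ x) (hρ : 1 ≤ ρ) :
    ∀ (n : ℕ) (W : List (SS r)) (g : G r), W.length ≤ n → prodList W = 1 →
      tpath ρ x g W = g := by
  intro n
  induction n with
  | zero =>
      intro W g hlen _
      rcases W with _ | ⟨σ, W⟩
      · rfl
      · simp at hlen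
  | succ n ih =>
      intro W g hlen hprod
      rcases W with _ | ⟨σ, W'⟩
      · rfl
      · have hne : (prodList (σ :: W')).norm ≠ (σ :: W').length := by
          rw [hprod, FreeGroup.norm_one]
          simp
        obtain ⟨l₁, σ', τ', l₂, heq, hinv⟩ := exists_cancel _ hne
        have hpp : prodList (l₁ ++ σ' :: τ' :: l₂) = prodList (l₁ ++ l₂) := by
          rw [prodList_append, prodList_append, prodList_cons, prodList_cons, hinv]
          group
        rw [heq, tpath_cancel_pair ρ x hyp hρ l₁ g hinv l₂]
        apply ih
        · have := congrArg List.length heq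
          simp at this hlen ⊢
          omega
        · rw [← hpp, ← heq, hprod]

lemma tpath_bound (hyp : Hyp ρ x) (hρ : 1 ≤ ρ) : ∀ (W : List (SS r)) (g : G r),
    ∃ m : List (SS r), tpath ρ x g W = g * prodList m ∧ m.length ≤ ρ * W.length
  | [], g => ⟨[], by simp, by simp⟩
  | σ :: W, g => by
      obtain ⟨m', hm', hl'⟩ := tpath_bound hyp hρ W (tstep ρ x g σ.val)
      refine ⟨pick ρ x g σ.val ++ m', ?_, ?_⟩
      · rw [tpath_cons, hm', prodList_append, tstep, mul_assoc]
      · rw [List.length_append, List.length_cons]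
        have h1 : (pick ρ x g σ.val).length ≤ ρ * 1 := by
          have h2 := pick_len ρ x hyp (g := g) (h := σ.val) (by rw [norm_SS]; exact hρ)
          rw [norm_SS] at h2
          exact h2
        have h3 : ρ * (W.length + 1) = ρ * W.length + ρ * 1 := by ring
        omega

lemma tpath_single (hyp : Hyp ρ x) (hρ : 1 ≤ ρ)
    (hxρ : ∀ (g : G r) (s : SS r), (x g s).norm ≤ ρ) (g : G r) (s : SS r) :
    tpath ρ x g (wordList (x g s)) = g * s.val := by
  obtain ⟨m, hm, hlen⟩ := tpath_bound ρ x hyp hρ (wordList (x g s)) g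
  have h1 : fmap x (tpath ρ x g (wordList (x g s))) = fmap x g * x g s := by
    rw [fmap_tpath ρ x hyp hρ, prodList_wordList]
  have hxn : (x g s).norm ≤ ρ := hxρ g s
  have hlen2 : (wordList (prodList m)).length ≤ ρ ^ 2 + 1 := by
    rw [length_wordList]
    calc (prodList m).norm ≤ m.length := norm_prodList_le m
    _ ≤ ρ * (wordList (x g s)).length := hlen
    _ = ρ * (x g s).norm := by rw [length_wordList]
    _ ≤ ρ * ρ := Nat.mul_le_mul_left _ hxn
    _ ≤ ρ ^ 2 + 1 := by rw [pow_two]; omega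
  have c1 : g * prodList (wordList (prodList m)) = tstep ρ x g (x g s) := by
    apply tstep_eq ρ x hyp hxn (reduced_wordList _) hlen2
    rw [prodList_wordList, ← hm, h1]
  have c2 : g * prodList [s] = tstep ρ x g (x g s) := by
    apply tstep_eq ρ x hyp hxn (reduced_singleton s) (by simp)
    rw [prodList_cons, prodList_nil, mul_one]
    exact fmap_mul_s x hyp.1 g s
  rw [prodList_wordList] at c1
  rw [prodList_cons, prodList_nil, mul_one] at c2
  rw [hm, c1, ← c2]

noncomputable def rangeW : G r → List (SS r) → List (SS r)
  | _, [] => []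
  | g, s :: l => wordList (x g s) ++ rangeW (g * s.val) l

@[simp] lemma rangeW_nil (g : G r) : rangeW x g [] = [] := rfl

@[simp] lemma rangeW_cons (g : G r) (s : SS r) (l : List (SS r)) :
    rangeW x g (s :: l) = wordList (x g s) ++ rangeW x (g * s.val) l := rfl

lemma prodList_rangeW : ∀ (l : List (SS r)) (g : G r),
    prodList (rangeW x g l) = wordEval r x g l
  | [], g => rfl
  | s :: l, g => by
      rw [rangeW_cons, prodList_append, prodList_wordList, wordEval_cons,
        prodList_rangeW l (g * s.val)]

lemma tpath_rangeW (hyp : Hyp ρ x) (hρ : 1 ≤ ρ)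
    (hxρ : ∀ (g : G r) (s : SS r), (x g s).norm ≤ ρ) :
    ∀ (l : List (SS r)) (g : G r), tpath ρ x g (rangeW x g l) = g * prodList l
  | [], g => by simp
  | s :: l, g => by
      rw [rangeW_cons, tpath_append, tpath_single ρ x hyp hρ hxρ g s,
        tpath_rangeW hyp hρ hxρ l (g * s.val), prodList_cons, mul_assoc]

lemma fmap_injective (hyp : Hyp ρ x) (hρ : 1 ≤ ρ)
    (hxρ : ∀ (g : G r) (s : SS r), (x g s).norm ≤ ρ) :
    Function.Injective (fmap x) := by
  intro a b hab
  set l : List (SS r) := wordList (a⁻¹ * b) with hl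
  have hb : a * prodList l = b := by rw [hl, prodList_wordList]; group
  set W : List (SS r) := rangeW x a l with hW
  have h1 : tpath ρ x a W = b := by rw [hW, tpath_rangeW ρ x hyp hρ hxρ l a, hb]
  have h2 : prodList W = 1 := by
    rw [hW, prodList_rangeW]
    have h3 := fmap_mul_prodList x hyp.1 l a
    rw [hb, hab] at h3
    exact (mul_left_cancel (a := fmap x b) (by rw [← h3, mul_one])).symm
  have h4 := tpath_prod_one ρ x hyp hρ W.length W a le_rfl h2
  rw [h4] at h1
  exact h1

lemma fmap_surjective (hyp : Hyp ρ x) (hρ : 1 ≤ ρ) :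
    Function.Surjective (fmap x) := by
  intro t
  refine ⟨tpath ρ x 1 (wordList t), ?_⟩
  rw [fmap_tpath ρ x hyp hρ, fmap_one, prodList_wordList, one_mul]

end Backward

lemma backward_dir (ρ : ℕ) (hr : 1 ≤ r) (x : G r → A r)
    (hxρ : ∀ (g : G r) (s : SS r), (x g s).norm ≤ ρ)
    (hax : ∀ g : G r, Axiom1 r (shift r g⁻¹ x) ∧ Axiom2 r ρ (shift r g⁻¹ x)) :
    ∃ φ : Equiv.Perm (G r), InSymRho r ρ φ ∧ E r φ = x := by
  rcases Nat.eq_zero_or_pos ρ with hρ0 | hρ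
  · exfalso
    subst hρ0
    obtain ⟨⟨l₀, _, hu⟩, _⟩ := (hax 1).2 1 (by rw [FreeGroup.norm_one])
    set s₀ : SS r := ofEl (⟨0, hr⟩, true) with hs₀
    have e1 : Reduced r ([] : List (SS r)) ∧ ([] : List (SS r)).length ≤ 0 ^ 2 + 1 ∧
        (1 : G r) = wordEval r (shift r 1⁻¹ x) 1 [] := ⟨reduced_nil, by simp, rfl⟩
    have e2 : Reduced r [s₀] ∧ [s₀].length ≤ 0 ^ 2 + 1 ∧
        (1 : G r) = wordEval r (shift r 1⁻¹ x) 1 [s₀] := by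
      refine ⟨reduced_singleton s₀, by simp, ?_⟩
      rw [wordEval_cons, wordEval_nil, mul_one, shift]
      have : (x (1⁻¹⁻¹ * 1) s₀).norm = 0 := Nat.le_zero.mp (hxρ _ _)
      rw [FreeGroup.norm_eq_zero] at this
      exact this.symm
    have := (hu [] e1).trans (hu [s₀] e2).symm
    simp at this
  · have hyp : Hyp ρ x := hyp_of_axioms ρ x hax
    have hinj := fmap_injective ρ x hyp hρ hxρ
    have hsurj := fmap_surjective ρ x hyp hρ
    set φ : Equiv.Perm (G r) := Equiv.ofBijective (fmap x) ⟨hinj, hsurj⟩ with hφ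
    have hφa : ∀ g, φ g = fmap x g := fun g => rfl
    have hEx : E r φ = x := by
      funext g s
      show (φ g)⁻¹ * φ (g * s.val) = x g s
      rw [hφa, hφa, fmap_mul_s x hyp.1 g s, inv_mul_cancel_left]
    refine ⟨φ, ⟨?_, ?_⟩, hEx⟩
    · rw [hφa, fmap_one]
    · intro g s hs
      set σ : SS r := ⟨s, hs⟩ with hσ
      constructor
      · have h1 : φ (g * s) = φ g * x g σ := by
          rw [hφa, hφa]
          exact fmap_mul_s x hyp.1 g σ
        rw [h1, inv_mul_cancel_left]
        exact hxρ g σ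
      · set a : G r := φ.symm g with ha
        set b : G r := φ.symm (g * s) with hb
        have hfa : fmap x a = g := φ.apply_symm_apply g
        have hfb : fmap x b = g * s := φ.apply_symm_apply (g * s)
        have hσn : (σ.val : G r).norm ≤ ρ := by rw [norm_SS]; exact hρ
        have key : tstep ρ x a σ.val = b := by
          apply hinj
          rw [tstep_spec ρ x hyp hσn, hfa, hfb]
        have h2 : a⁻¹ * b = prodList (pick ρ x a σ.val) := by
          rw [← key, tstep, inv_mul_cancel_left]
        rw [h2]
        calc (prodList (pick ρ x a σ.val)).norm ≤ (pick ρ x a σ.val).length :=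
              norm_prodList_le _
        _ ≤ ρ * (σ.val : G r).norm := pick_len ρ x hyp hσn
        _ = ρ := by rw [norm_SS, mul_one]

end Helpers

/-- For `x ∈ 𝙰_ρ^G`, `x ∈ ℰ(sym_ρ(G))` iff every translate
`z = g⁻¹·x` satisfies Axiom 1 and Axiom 2. -/
theorem statement14 (r ρ : ℕ) (hr : 1 ≤ r) (x : G r → A r)
    (hxρ : ∀ (g : G r) (s : SS r), (x g s).norm ≤ ρ) :
    (∃ φ : Equiv.Perm (G r), InSymRho r ρ φ ∧ E r φ = x) ↔
      ∀ g : G r, Axiom1 r (shift r g⁻¹ x) ∧ Axiom2 r ρ (shift r g⁻¹ x) := by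
  constructor
  · rintro ⟨φ, hsym, hEx⟩
    exact forward_dir ρ x φ hsym hEx
  · intro hax
    exact backward_dir ρ hr x hxρ hax

end Stmt14
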